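/- Let α be a permutation with a cycle (i₁ ⋯ i_a) of length a, and let τ act on ordered pairs by τ(x,y) = (y^α, x^α). Then the a² pairs with both coordinates in {i₁,…,i_a} decompose under τ into orbits with cycle-structure monomial: x_a · x_{2a}^{(a−1)/2} if a is odd; x_a^a if a ≡ 0 mod 4; x_{a/2}² · x_a^{a−1} if a ≡ 2 mod 4. -/

import Mathlib

theorem ncard_sUnion_eq_card_mul {β : Type*} (C : Finset (Set β)) (s : ℕ)
    (hfin : ∀ O ∈ C, Set.Finite O)
    (hcard : ∀ O ∈ C, Set.ncard O = s)
    (hdisj : ∀ O ∈ C, ∀ O' ∈ C, O ≠ O' → Disjoint O O') :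
    (⋃₀ (C : Set (Set β))).ncard = C.card * s := by
  classical
  induction C using Finset.induction_on with
  | empty => simp
  | @insert O C hOC ih =>
    have hfin' : ∀ O' ∈ C, Set.Finite O' := fun O' h => hfin O' (Finset.mem_insert_of_mem h)
    have hUfin : (⋃₀ (C : Set (Set β))).Finite :=
      Set.Finite.sUnion C.finite_toSet (fun O' h => hfin' O' h)
    have hd : Disjoint O (⋃₀ (C : Set (Set β))) := by
      rw [Set.disjoint_sUnion_right]
      intro t ht
      exact hdisj O (Finset.mem_insert_self _ _) t (Finset.mem_insert_of_mem ht)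
        (fun h => hOC (h ▸ ht))
    rw [Finset.coe_insert, Set.sUnion_insert,
      Set.ncard_union_eq hd (hfin O (Finset.mem_insert_self _ _)) hUfin,
      ih hfin' (fun O' h => hcard O' (Finset.mem_insert_of_mem h))
        (fun O' h O'' h' => hdisj O' (Finset.mem_insert_of_mem h) O'' (Finset.mem_insert_of_mem h')),
      Finset.card_insert_of_notMem hOC,
      hcard O (Finset.mem_insert_self _ _)]
    ring

theorem stmt13 {X : Type*} [Fintype X] (α : Equiv.Perm X) (a : ℕ) (ha : 1 ≤ a)
    (xa : X) (Sa : Set X) (hSa : Sa = {y | α.SameCycle xa y}) (hca : Sa.ncard = a) :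
    ∀ τ : Equiv.Perm (X × X), τ = (Equiv.prodComm X X).trans (Equiv.prodCongr α α) →
    ∀ 𝒪 : Set (Set (X × X)),
      𝒪 = {O | ∃ p ∈ Sa ×ˢ Sa, O = {q | τ.SameCycle p q}} →
    (a % 2 = 1 →
      Set.ncard {O ∈ 𝒪 | O.ncard = a} = 1 ∧
      Set.ncard {O ∈ 𝒪 | O.ncard = 2 * a} = (a - 1) / 2 ∧
      ∀ O ∈ 𝒪, O.ncard = a ∨ O.ncard = 2 * a) ∧
    (a % 4 = 0 → Set.ncard 𝒪 = a ∧ ∀ O ∈ 𝒪, O.ncard = a) ∧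
    (a % 4 = 2 →
      Set.ncard {O ∈ 𝒪 | O.ncard = a / 2} = 2 ∧
      Set.ncard {O ∈ 𝒪 | O.ncard = a} = a - 1 ∧
      ∀ O ∈ 𝒪, O.ncard = a / 2 ∨ O.ncard = a) := by
  intro τ hτ 𝒪 h𝒪
  haveI : NeZero a := ⟨by omega⟩
  haveI : Finite (Set (X × X)) := inferInstanceAs (Finite ((X × X) → Prop))
  -- basic facts about the cycle
  have hfin : Sa.Finite := Set.toFinite _
  have hxamem : xa ∈ Sa := by rw [hSa]; exact Equiv.Perm.SameCycle.refl α xa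
  have hC : α.IsCycleOn Sa := by
    subst hSa
    refine ⟨⟨fun y hy => ?_, α.injective.injOn, fun y hy => ?_⟩, fun x hx y hy => ?_⟩
    · exact Equiv.Perm.sameCycle_apply_right.mpr hy
    · exact ⟨α⁻¹ y, Equiv.Perm.sameCycle_symm_apply_right.mpr hy, by simp⟩
    · exact (Equiv.Perm.SameCycle.symm hx).trans hy
  have hCS : α.IsCycleOn ↑(hfin.toFinset) := by rwa [Set.Finite.coe_toFinset]
  have hxaSF : xa ∈ hfin.toFinset := hfin.mem_toFinset.2 hxamem
  have hSFcard : (hfin.toFinset).card = a := by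
    rw [← Set.ncard_eq_toFinset_card _ hfin]; exact hca
  have key : ∀ m n : ℕ, (α ^ m) xa = (α ^ n) xa ↔ m ≡ n [MOD a] := by
    intro m n
    have := hCS.pow_apply_eq_pow_apply hxaSF (m := m) (n := n)
    rwa [hSFcard] at this
  have hv : ∀ x : ZMod a, ((x.val : ℕ) : ZMod a) = x := ZMod.natCast_rightInverse
  set f : ZMod a → X := fun k => (α ^ (k.val)) xa with hf
  have hf_inj : Function.Injective f := by
    intro k k' h
    have h2 : k.val % a = k'.val % a := (key _ _).1 h
    rw [Nat.mod_eq_of_lt (ZMod.val_lt k), Nat.mod_eq_of_lt (ZMod.val_lt k')] at h2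
    rw [← hv k, ← hv k', h2]
  have hfc : ∀ n : ℕ, (α ^ n) xa = f ((n : ZMod a)) := by
    intro n
    apply (key n _).2
    rw [ZMod.val_natCast]
    exact (Nat.mod_modEq n a).symm
  have hrangef : Set.range f = Sa := by
    rw [← hC.range_pow hfin hxamem]
    apply Set.Subset.antisymm
    · rintro _ ⟨k, rfl⟩; exact ⟨k.val, rfl⟩
    · rintro _ ⟨n, rfl⟩; exact ⟨(n : ZMod a), (hfc n).symm⟩
  have hstep : ∀ k : ZMod a, α (f k) = f (k + 1) := by
    intro k
    have h1 : α ((α ^ k.val) xa) = (α ^ (k.val + 1)) xa := by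
      rw [pow_succ']; rfl
    show α ((α ^ k.val) xa) = f (k+1)
    rw [h1, hfc (k.val + 1)]
    congr 1
    push_cast
    rw [hv]
  -- τ applied
  have hτap : ∀ x y : X, τ (x, y) = (α y, α x) := by intro x y; rw [hτ]; rfl
  have hτf : ∀ i j : ZMod a, τ (f i, f j) = (f (j + 1), f (i + 1)) := by
    intro i j; rw [hτap, hstep, hstep]
  -- iterates of τ
  have hpow : ∀ (n : ℕ) (i j : ZMod a), (τ ^ n) (f i, f j) =
      if Even n then (f (i + (n : ZMod a)), f (j + (n : ZMod a)))
      else (f (j + (n : ZMod a)), f (i + (n : ZMod a))) := by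
    intro n
    induction n with
    | zero => intro i j; simp
    | succ n ih =>
      intro i j
      have h1 : (τ ^ (n + 1)) (f i, f j) = (τ ^ n) (τ (f i, f j)) := by
        rw [pow_succ]; rfl
      rw [h1, hτf, ih]
      push_cast
      rcases Nat.even_or_odd n with he | ho
      · have h2 : ¬ Even (n + 1) := by simp [Nat.even_add_one, he]
        simp only [if_pos he, if_neg h2]
        congr 1 <;> · congr 1; ring
      · have he' : ¬ Even n := Nat.not_even_iff_odd.mpr ho
        have h2 : Even (n + 1) := by simp [Nat.even_add_one, he']
        simp only [if_neg he', if_pos h2]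
        congr 1 <;> · congr 1; ring
  -- the pair map
  set F : ZMod a × ZMod a → X × X := fun p => (f p.1, f p.2) with hF
  have hFinj : Function.Injective F := by
    rintro ⟨i, j⟩ ⟨i', j'⟩ h
    simp only [hF, Prod.mk.injEq] at h
    exact Prod.ext (hf_inj h.1) (hf_inj h.2)
  have hFrange : Set.range F = Sa ×ˢ Sa := by
    ext ⟨x, y⟩
    simp only [Set.mem_range, Set.mem_prod, ← hrangef]
    constructor
    · rintro ⟨⟨i, j⟩, h⟩
      rw [hF] at h
      simp only [Prod.mk.injEq] at h
      exact ⟨⟨i, h.1⟩, ⟨j, h.2⟩⟩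
    · rintro ⟨⟨i, hi⟩, ⟨j, hj⟩⟩
      exact ⟨(i, j), by rw [hF]; simp [hi, hj]⟩
  -- same-cycle characterization
  have hSC : ∀ (i j : ZMod a) (q : X × X), τ.SameCycle (f i, f j) q ↔
      ∃ c : ZMod a, q = (f (i + 2*c), f (j + 2*c)) ∨ q = (f (j + 1 + 2*c), f (i + 1 + 2*c)) := by
    intro i j q
    constructor
    · intro h
      obtain ⟨n, -, hn⟩ := h.exists_pow_eq'
      rcases Nat.even_or_odd n with ⟨m, hm⟩ | ⟨m, hm⟩
      · refine ⟨(m : ZMod a), Or.inl ?_⟩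
        rw [← hn, hpow, if_pos ⟨m, hm⟩]
        congr 1 <;> · congr 1; rw [hm]; push_cast; ring
      · refine ⟨(m : ZMod a), Or.inr ?_⟩
        have hne : ¬ Even n := Nat.not_even_iff_odd.mpr ⟨m, hm⟩
        rw [← hn, hpow, if_neg hne]
        congr 1 <;> · congr 1; rw [hm]; push_cast; ring
    · rintro ⟨c, rfl | rfl⟩
      · refine ⟨((2 * c.val : ℕ) : ℤ), ?_⟩
        rw [zpow_natCast, hpow, if_pos ⟨c.val, by ring⟩]
        congr 1 <;> · congr 1; push_cast [hv]; ring
      · refine ⟨((2 * c.val + 1 : ℕ) : ℤ), ?_⟩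
        have hne : ¬ Even (2 * c.val + 1) := by
          simp [Nat.even_add_one, parity_simps]
        rw [zpow_natCast, hpow, if_neg hne]
        congr 1 <;> · congr 1; push_cast [hv]; ring
  -- fixed point characterization
  have hfix : ∀ (n : ℕ) (i j : ZMod a), ((τ ^ n) (f i, f j) = (f i, f j)) ↔
      (if Even n then ((n : ZMod a) = 0)
       else ((n : ZMod a) = i - j ∧ (n : ZMod a) = j - i)) := by
    intro n i j
    rw [hpow]
    by_cases he : Even n
    · rw [if_pos he, if_pos he]
      simp only [Prod.mk.injEq]
      constructor
      · rintro ⟨h1, -⟩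
        have h2 := hf_inj h1
        rwa [add_eq_left] at h2
      · intro h0; rw [h0]; simp
    · rw [if_neg he, if_neg he]
      simp only [Prod.mk.injEq]
      constructor
      · rintro ⟨h1, h2⟩
        have h1' := hf_inj h1
        have h2' := hf_inj h2
        constructor
        · rw [← h1']; ring
        · rw [← h2']; ring
      · rintro ⟨h1, h2⟩
        constructor
        · rw [h1]; congr 1; ring
        · rw [h2]; congr 1; ring
  -- orbit sizes divide periods
  have horb : ∀ p : X × X, ∀ n : ℕ,
      ((τ ^ n) p = p ↔ ({q | τ.SameCycle p q}).ncard ∣ n) := by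
    intro p n
    have hOfin : ({q | τ.SameCycle p q}).Finite := Set.toFinite _
    have hIs : τ.IsCycleOn ↑(hOfin.toFinset) := by
      rw [Set.Finite.coe_toFinset]
      refine ⟨⟨fun q hq => ?_, τ.injective.injOn, fun q hq => ?_⟩, fun x hx y hy => ?_⟩
      · exact Equiv.Perm.sameCycle_apply_right.mpr hq
      · exact ⟨τ⁻¹ q, Equiv.Perm.sameCycle_symm_apply_right.mpr hq, by simp⟩
      · exact (Equiv.Perm.SameCycle.symm hx).trans hy
    have hp : p ∈ hOfin.toFinset := hOfin.mem_toFinset.2 (Equiv.Perm.SameCycle.refl τ p)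
    exact (hIs.pow_apply_eq hp).trans
      (by rw [← Set.ncard_eq_toFinset_card _ hOfin])
  have horbeq : ∀ p q : X × X, τ.SameCycle p q →
      {r | τ.SameCycle p r} = {r | τ.SameCycle q r} := by
    intro p q h
    ext r
    exact ⟨fun h' => (h.symm).trans h', fun h' => h.trans h'⟩
  have hOorb : ∀ O ∈ 𝒪, ∃ r : ZMod a × ZMod a, O = {q | τ.SameCycle (F r) q} := by
    intro O hO
    rw [h𝒪] at hO
    obtain ⟨p, hp, rfl⟩ := hO
    rw [← hFrange] at hp
    obtain ⟨r, rfl⟩ := hp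
    exact ⟨r, rfl⟩
  have hz : ∀ n : ℕ, ((n : ZMod a) = 0) ↔ a ∣ n :=
    fun n => ZMod.natCast_eq_zero_iff n a
  -- orbit size, odd case
  have hsize_odd : a % 2 = 1 → ∀ i j : ZMod a,
      ({q | τ.SameCycle (f i, f j) q}).ncard = if i = j then a else 2 * a := by
    intro ha2 i j
    set s := ({q | τ.SameCycle (f i, f j) q}).ncard with hs
    have hper : ∀ n : ℕ, (if Even n then ((n : ZMod a) = 0)
        else ((n : ZMod a) = i - j ∧ (n : ZMod a) = j - i)) ↔ s ∣ n :=
      fun n => (hfix n i j).symm.trans (horb (f i, f j) n)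
    by_cases hij : i = j
    · subst hij
      rw [if_pos rfl]
      have h1 : s ∣ a := by
        rw [← hper a]
        have hne : ¬ Even a := by simp [Nat.even_iff, ha2]
        rw [if_neg hne]
        constructor <;> simp [ZMod.natCast_self]
      have h2 : a ∣ s := by
        have hp2 := (hper s).2 dvd_rfl
        by_cases hse : Even s
        · rw [if_pos hse] at hp2; exact (hz s).1 hp2
        · rw [if_neg hse] at hp2
          refine (hz s).1 ?_
          rw [hp2.1]; ring
      exact Nat.dvd_antisymm h1 h2
    · rw [if_neg hij]
      have h1 : s ∣ 2 * a := by
        rw [← hper (2 * a)]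
        have he : Even (2 * a) := ⟨a, by ring⟩
        rw [if_pos he]
        push_cast [ZMod.natCast_self]
        ring
      have h2 : 2 * a ∣ s := by
        have hp2 := (hper s).2 dvd_rfl
        by_cases hse : Even s
        · rw [if_pos hse] at hp2
          have had : a ∣ s := (hz s).1 hp2
          exact Nat.Coprime.mul_dvd_of_dvd_of_dvd
            (Nat.coprime_two_left.mpr (Nat.odd_iff.mpr ha2))
            hse.two_dvd had
        · rw [if_neg hse] at hp2
          exfalso
          apply hij
          have h4 : i - j = j - i := hp2.1.symm.trans hp2.2
          have h3 : (2 : ZMod a) * (i - j) = 0 := by linear_combination h4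
          have hm : (((a+1)/2 : ℕ) : ZMod a) * 2 = 1 := by
            have h6 : (((a+1)/2 : ℕ) : ZMod a) * 2 = (((a+1)/2 * 2 : ℕ) : ZMod a) := by
              push_cast; ring
            rw [h6, show (a+1)/2*2 = a+1 from by omega]
            push_cast [ZMod.natCast_self]
            ring
          have h5 : i - j = 0 := by
            calc i - j = ((((a+1)/2 : ℕ) : ZMod a) * 2) * (i - j) := by rw [hm]; ring
            _ = (((a+1)/2 : ℕ) : ZMod a) * ((2 : ZMod a) * (i - j)) := by ring
            _ = 0 := by rw [h3]; ring
          exact sub_eq_zero.mp h5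
      exact Nat.dvd_antisymm h1 h2
  -- orbit size, even case
  have hsize_even : a % 2 = 0 → ∀ i j : ZMod a,
      ({q | τ.SameCycle (f i, f j) q}).ncard =
        if (a/2) % 2 = 1 ∧ i - j = ((a/2 : ℕ) : ZMod a) then a / 2 else a := by
    intro ha2 i j
    set s := ({q | τ.SameCycle (f i, f j) q}).ncard with hs
    have hper : ∀ n : ℕ, (if Even n then ((n : ZMod a) = 0)
        else ((n : ZMod a) = i - j ∧ (n : ZMod a) = j - i)) ↔ s ∣ n :=
      fun n => (hfix n i j).symm.trans (horb (f i, f j) n)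
    have heva : Even a := Nat.even_iff.mpr ha2
    have h2d : ((a/2 : ℕ) : ZMod a) + ((a/2 : ℕ) : ZMod a) = 0 := by
      rw [← Nat.cast_add, show a/2 + a/2 = a from by omega, ZMod.natCast_self]
    by_cases hcase : (a/2) % 2 = 1 ∧ i - j = ((a/2 : ℕ) : ZMod a)
    · rw [if_pos hcase]
      obtain ⟨hodd2, hd⟩ := hcase
      have h1 : s ∣ a / 2 := by
        rw [← hper (a/2)]
        have hne : ¬ Even (a/2) := by rw [Nat.even_iff]; omega
        rw [if_neg hne]
        refine ⟨hd.symm, ?_⟩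
        have hdd : ((a/2 : ℕ) : ZMod a) = -((a/2 : ℕ) : ZMod a) := by
          linear_combination h2d
        rw [hdd, ← hd]; ring
      have h2 : a / 2 ∣ s := by
        have hp2 := (hper s).2 dvd_rfl
        by_cases hse : Even s
        · rw [if_pos hse] at hp2
          exact dvd_trans ⟨2, by omega⟩ ((hz s).1 hp2)
        · rw [if_neg hse] at hp2
          have h3 : s ≡ a/2 [MOD a] := by
            rw [← ZMod.natCast_eq_natCast_iff, hp2.1, hd]
          have h4 : s % a = (a/2) % a := h3
          have h5 : (a/2) % a = a/2 := Nat.mod_eq_of_lt (by omega)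
          have hq : s = a * (s / a) + a/2 := by
            conv_lhs => rw [← Nat.div_add_mod s a, h4, h5]
          refine ⟨2 * (s / a) + 1, ?_⟩
          have ha2' : a/2 * 2 = a := by omega
          calc s = a * (s / a) + a/2 := hq
          _ = (a/2 * 2) * (s / a) + a/2 := by rw [ha2']
          _ = a / 2 * (2 * (s / a) + 1) := by ring
      exact Nat.dvd_antisymm h1 h2
    · rw [if_neg hcase]
      have h1 : s ∣ a := by
        rw [← hper a]
        rw [if_pos heva, ZMod.natCast_self]
      have h2 : a ∣ s := by
        have hp2 := (hper s).2 dvd_rfl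
        by_cases hse : Even s
        · rw [if_pos hse] at hp2; exact (hz s).1 hp2
        · rw [if_neg hse] at hp2
          exfalso
          have h4 : i - j = j - i := hp2.1.symm.trans hp2.2
          have h3 : (i - j) + (i - j) = 0 := by linear_combination h4
          -- a ∣ 2 * (i-j).val
          have hval : ((2 * (i-j).val : ℕ) : ZMod a) = 0 := by
            push_cast [hv]
            linear_combination h3
          have hdvd2 : a ∣ 2 * (i-j).val := (hz _).1 hval
          have hvlt : (i-j).val < a := ZMod.val_lt _
          obtain ⟨k, hk⟩ := hdvd2
          have hk01 : 2 * (i-j).val = 0 ∨ 2 * (i-j).val = a := by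
            match k, hk with
            | 0, hk => omega
            | 1, hk => omega
            | (k+2), hk =>
              have hge : a * 2 ≤ a * (k + 2) := Nat.mul_le_mul_left a (by omega)
              omega
          rcases hk01 with h0 | hha
          · -- i = j : then s ≡ 0, so a ∣ s, so s even, contradiction
            have hij : i - j = 0 := by
              have : (i-j).val = 0 := by omega
              rw [← hv (i - j), this, Nat.cast_zero]
            have : a ∣ s := (hz s).1 (by rw [hp2.1, hij])
            obtain ⟨k', hk'⟩ := this
            exact hse (by rw [hk']; exact heva.mul_right k')
          · -- i - j = a/2
            have hij2 : i - j = ((a/2 : ℕ) : ZMod a) := by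
              have hv2 : (i-j).val = a/2 := by omega
              rw [← hv (i - j), hv2]
            have hodd2 : ¬ ((a/2) % 2 = 1) := fun h => hcase ⟨h, hij2⟩
            -- then s ≡ a/2 mod a with a/2 even → s even, contradiction
            have h3' : s ≡ a/2 [MOD a] := by
              rw [← ZMod.natCast_eq_natCast_iff, hp2.1, hij2]
            have h4' : s % a = (a/2) % a := h3'
            have h5' : (a/2) % a = a/2 := Nat.mod_eq_of_lt (by omega)
            have hq : s = a * (s / a) + a/2 := by
              conv_lhs => rw [← Nat.div_add_mod s a, h4', h5']
            apply hse
            rw [hq]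
            exact (heva.mul_right _).add (Nat.even_iff.mpr (by omega))
      exact Nat.dvd_antisymm h1 h2
  -- the main counting lemma
  have main_count : ∀ s : ℕ,
      Set.ncard {O ∈ 𝒪 | O.ncard = s} * s
        = ({p : ZMod a × ZMod a | ({q | τ.SameCycle (F p) q}).ncard = s}).ncard := by
    intro s
    set T := {p : ZMod a × ZMod a | ({q | τ.SameCycle (F p) q}).ncard = s} with hT
    set C := {O ∈ 𝒪 | O.ncard = s} with hCdef
    have hCfin : C.Finite := Set.toFinite _
    have hunion : ⋃₀ C = F '' T := by
      apply Set.Subset.antisymm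
      · rintro q ⟨O, ⟨hO𝒪, hOs⟩, hq⟩
        obtain ⟨r, rfl⟩ := hOorb O hO𝒪
        have hq' : τ.SameCycle (F r) q := hq
        obtain ⟨c, hc | hc⟩ := (hSC r.1 r.2 q).1 hq'
        · refine ⟨(r.1 + 2*c, r.2 + 2*c), ?_, hc.symm⟩
          have hsc2 : τ.SameCycle (F r) (F (r.1 + 2*c, r.2 + 2*c)) := by
            rw [show F (r.1 + 2*c, r.2 + 2*c) = (f (r.1 + 2*c), f (r.2 + 2*c)) from rfl, ← hc]
            exact hq'
          show ({q' | τ.SameCycle (F (r.1 + 2*c, r.2 + 2*c)) q'}).ncard = s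
          rw [← horbeq _ _ hsc2]
          exact hOs
        · refine ⟨(r.2 + 1 + 2*c, r.1 + 1 + 2*c), ?_, hc.symm⟩
          have hsc2 : τ.SameCycle (F r) (F (r.2 + 1 + 2*c, r.1 + 1 + 2*c)) := by
            rw [show F (r.2 + 1 + 2*c, r.1 + 1 + 2*c)
                = (f (r.2 + 1 + 2*c), f (r.1 + 1 + 2*c)) from rfl, ← hc]
            exact hq'
          show ({q' | τ.SameCycle (F (r.2 + 1 + 2*c, r.1 + 1 + 2*c)) q'}).ncard = s
          rw [← horbeq _ _ hsc2]
          exact hOs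
      · rintro _ ⟨p, hp, rfl⟩
        refine ⟨{q | τ.SameCycle (F p) q}, ⟨?_, hp⟩, Equiv.Perm.SameCycle.refl τ (F p)⟩
        rw [h𝒪]
        exact ⟨F p, by rw [← hFrange]; exact ⟨p, rfl⟩, rfl⟩
    have hdisj : ∀ O ∈ C, ∀ O' ∈ C, O ≠ O' → Disjoint O O' := by
      rintro O ⟨hO, -⟩ O' ⟨hO', -⟩ hne
      obtain ⟨r, rfl⟩ := hOorb O hO
      obtain ⟨r', rfl⟩ := hOorb O' hO'
      rw [Set.disjoint_left]
      intro q hq hq'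
      exact hne ((horbeq _ _ hq).trans (horbeq _ _ hq').symm)
    have e1 : (⋃₀ ((hCfin.toFinset : Finset (Set (X × X))) : Set (Set (X × X)))).ncard
        = hCfin.toFinset.card * s := by
      apply ncard_sUnion_eq_card_mul
      · intro O _; exact Set.toFinite O
      · intro O hO; exact ((hCfin.mem_toFinset).1 hO).2
      · intro O hO O' hO' hne
        exact hdisj O ((hCfin.mem_toFinset).1 hO) O' ((hCfin.mem_toFinset).1 hO') hne
    rw [Set.Finite.coe_toFinset, hunion, Set.ncard_image_of_injective T hFinj,
      ← Set.ncard_eq_toFinset_card C hCfin] at e1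
    exact e1.symm
  -- cardinalities of lines in ZMod a × ZMod a
  have hcard_univ : (Set.univ : Set (ZMod a × ZMod a)).ncard = a * a := by
    rw [Set.ncard_univ, Nat.card_prod, Nat.card_zmod]
  have hline : ∀ d : ZMod a, ({p : ZMod a × ZMod a | p.1 - p.2 = d}).ncard = a := by
    intro d
    have he : {p : ZMod a × ZMod a | p.1 - p.2 = d}
        = Set.range (fun i : ZMod a => (i, i - d)) := by
      ext ⟨x, y⟩
      simp only [Set.mem_setOf_eq, Set.mem_range, Prod.mk.injEq]
      constructor
      · intro h; exact ⟨x, rfl, by rw [← h]; ring⟩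
      · rintro ⟨i, rfl, rfl⟩; ring
    have hinj : Function.Injective (fun i : ZMod a => (i, i - d)) := by
      intro i i' h
      exact (Prod.ext_iff.1 h).1
    rw [he, ← Set.image_univ, Set.ncard_image_of_injective _ hinj, Set.ncard_univ,
      Nat.card_zmod]
  have hlinec : ∀ d : ZMod a,
      ({p : ZMod a × ZMod a | p.1 - p.2 ≠ d}).ncard = a * a - a := by
    intro d
    have he : {p : ZMod a × ZMod a | p.1 - p.2 ≠ d}
        = Set.univ \ {p : ZMod a × ZMod a | p.1 - p.2 = d} := by
      ext p; simp
    rw [he, Set.ncard_diff (Set.subset_univ _), hcard_univ, hline]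
  refine ⟨?_, ?_, ?_⟩
  -- Case a odd
  · intro ha2
    have hsz := hsize_odd ha2
    have hallO : ∀ O ∈ 𝒪, O.ncard = a ∨ O.ncard = 2 * a := by
      intro O hO
      obtain ⟨r, rfl⟩ := hOorb O hO
      show ({q | τ.SameCycle (F r) q}).ncard = a ∨ _
      rw [show F r = (f r.1, f r.2) from rfl, hsz r.1 r.2]
      split_ifs
      · exact Or.inl rfl
      · exact Or.inr rfl
    refine ⟨?_, ?_, hallO⟩
    · have hc1 := main_count a
      have hT1 : {p : ZMod a × ZMod a | ({q | τ.SameCycle (F p) q}).ncard = a}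
          = {p : ZMod a × ZMod a | p.1 - p.2 = 0} := by
        ext ⟨i, j⟩
        show ({q | τ.SameCycle (F (i, j)) q}).ncard = a ↔ i - j = 0
        rw [show F (i, j) = (f i, f j) from rfl, hsz i j, sub_eq_zero]
        split_ifs with h
        · simp [h]
        · constructor
          · intro hh; omega
          · intro hh; exact absurd hh h
      rw [hT1, hline 0] at hc1
      refine Nat.eq_of_mul_eq_mul_right (m := a) (by omega) ?_
      rw [hc1, one_mul]
    · have hc2 := main_count (2 * a)
      have hT2 : {p : ZMod a × ZMod a | ({q | τ.SameCycle (F p) q}).ncard = 2 * a}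
          = {p : ZMod a × ZMod a | p.1 - p.2 ≠ 0} := by
        ext ⟨i, j⟩
        show ({q | τ.SameCycle (F (i, j)) q}).ncard = 2 * a ↔ ¬ (i - j = 0)
        rw [show F (i, j) = (f i, f j) from rfl, hsz i j, sub_eq_zero]
        split_ifs with h
        · constructor
          · intro hh; omega
          · intro hh; exact absurd h hh
        · simp [h]
      rw [hT2, hlinec 0] at hc2
      have harith : (a - 1) / 2 * (2 * a) = a * a - a := by
        have h2 : (a - 1) / 2 * 2 = a - 1 := Nat.div_mul_cancel (by omega)
        calc (a - 1) / 2 * (2 * a) = ((a - 1) / 2 * 2) * a := by ring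
        _ = (a - 1) * a := by rw [h2]
        _ = a * a - 1 * a := by rw [tsub_mul]
        _ = a * a - a := by rw [one_mul]
      exact Nat.eq_of_mul_eq_mul_right (by omega : 0 < 2 * a) (by rw [hc2, harith])
  -- Case a ≡ 0 mod 4
  · intro ha4
    have ha2 : a % 2 = 0 := by omega
    have hsz := hsize_even ha2
    have hcond : ¬ ((a/2) % 2 = 1) := by omega
    have hallO : ∀ O ∈ 𝒪, O.ncard = a := by
      intro O hO
      obtain ⟨r, rfl⟩ := hOorb O hO
      show ({q | τ.SameCycle (F r) q}).ncard = a
      rw [show F r = (f r.1, f r.2) from rfl, hsz r.1 r.2,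
        if_neg (fun h => hcond h.1)]
    refine ⟨?_, hallO⟩
    have hc1 := main_count a
    have hT1 : {p : ZMod a × ZMod a | ({q | τ.SameCycle (F p) q}).ncard = a}
        = Set.univ := by
      ext ⟨i, j⟩
      simp only [Set.mem_univ, iff_true]
      show ({q | τ.SameCycle (F (i, j)) q}).ncard = a
      rw [show F (i, j) = (f i, f j) from rfl, hsz i j, if_neg (fun h => hcond h.1)]
    rw [hT1, hcard_univ] at hc1
    have h𝒪eq : {O ∈ 𝒪 | O.ncard = a} = 𝒪 := by
      ext O
      exact ⟨fun h => h.1, fun h => ⟨h, hallO O h⟩⟩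
    rw [h𝒪eq] at hc1
    exact Nat.eq_of_mul_eq_mul_right (by omega) hc1
  -- Case a ≡ 2 mod 4
  · intro ha4
    have ha2 : a % 2 = 0 := by omega
    have hsz := hsize_even ha2
    have hcond : (a/2) % 2 = 1 := by omega
    have hne : a / 2 ≠ a := by omega
    have hallO : ∀ O ∈ 𝒪, O.ncard = a / 2 ∨ O.ncard = a := by
      intro O hO
      obtain ⟨r, rfl⟩ := hOorb O hO
      show ({q | τ.SameCycle (F r) q}).ncard = a / 2 ∨ _
      rw [show F r = (f r.1, f r.2) from rfl, hsz r.1 r.2]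
      split_ifs
      · exact Or.inl rfl
      · exact Or.inr rfl
    refine ⟨?_, ?_, hallO⟩
    · have hc1 := main_count (a / 2)
      have hT1 : {p : ZMod a × ZMod a | ({q | τ.SameCycle (F p) q}).ncard = a / 2}
          = {p : ZMod a × ZMod a | p.1 - p.2 = ((a/2 : ℕ) : ZMod a)} := by
        ext ⟨i, j⟩
        show ({q | τ.SameCycle (F (i, j)) q}).ncard = a / 2 ↔ i - j = ((a/2 : ℕ) : ZMod a)
        rw [show F (i, j) = (f i, f j) from rfl, hsz i j]
        split_ifs with h
        · simp [h.2]
        · constructor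
          · intro hh; exact absurd hh.symm hne
          · intro hh; exact absurd ⟨hcond, hh⟩ h
      rw [hT1, hline] at hc1
      have ha' : a = 2 * (a / 2) := by omega
      refine Nat.eq_of_mul_eq_mul_right (by omega : 0 < a / 2) ?_
      rw [hc1]; omega
    · have hc2 := main_count a
      have hT2 : {p : ZMod a × ZMod a | ({q | τ.SameCycle (F p) q}).ncard = a}
          = {p : ZMod a × ZMod a | p.1 - p.2 ≠ ((a/2 : ℕ) : ZMod a)} := by
        ext ⟨i, j⟩
        show ({q | τ.SameCycle (F (i, j)) q}).ncard = a ↔ ¬ (i - j = ((a/2 : ℕ) : ZMod a))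
        rw [show F (i, j) = (f i, f j) from rfl, hsz i j]
        split_ifs with h
        · constructor
          · intro hh; exact absurd hh hne
          · intro hh; exact absurd h.2 hh
        · constructor
          · intro _ hh; exact h ⟨hcond, hh⟩
          · intro _; rfl
      rw [hT2, hlinec] at hc2
      have harith : (a - 1) * a = a * a - a := by
        rw [tsub_mul, one_mul]
      exact Nat.eq_of_mul_eq_mul_right (by omega : 0 < a) (by rw [hc2, harith])
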